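/- Characterization of the subalgebra N via convolution: for n ∈ M, the following are equivalent: (a) n ∈ N; (b) a * n = μ₀(a) n for all a ∈ A₋₁,₀; (c) a * (n m) = n (a * m) for all a ∈ A₋₁,₀ and m ∈ M; (d) a * (m n) = (a * m) n for all a ∈ A₋₁,₀ and m ∈ M. Here a * m = w₋₁* a γ(m) w₋₁ and also 1 * m = E₀(m). -/
import Mathlib


/-- characterization of `N` via convolution: for `n ∈ M` the
following are equivalent, where `a * m = w₋₁* a γ(m) w₋₁` and `1 * m = E₀(m)`:
(a) `n ∈ N`; (b) `a * n = μ₀(a) n` for all `a ∈ A₋₁,₀`;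
(c) `a * (n m) = n (a * m)` for all `a ∈ A₋₁,₀`, `m ∈ M`;
(d) `a * (m n) = (a * m) n` for all `a ∈ A₋₁,₀`, `m ∈ M`.
(`wm1 = w₋₁`, `A` is the relative commutant `A₋₁,₀ = M ∩ γ(M)'`.) -/
theorem subalgebra_characterization_via_convolution
    {B : Type*} [Ring B] [StarRing B] [Algebra ℂ B] [StarModule ℂ B]
    (M N : StarSubalgebra ℂ B) (hNM : N ≤ M)
    (γ : B →⋆ₐ[ℂ] B) (hγM : ∀ m ∈ M, γ m ∈ N)
    (wm1 : B) (hwN : wm1 ∈ N) (hiso : star wm1 * wm1 = 1)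
    (hintN : ∀ n ∈ N, wm1 * n = γ n * wm1)
    (hE0fix : ∀ m ∈ M, star wm1 * γ m * wm1 = m ↔ m ∈ N)
    (A : Set B) (hA : A = {a : B | a ∈ M ∧ ∀ m ∈ M, a * γ m = γ m * a})
    (μ₀ : B → ℂ) (hμ₀ : ∀ a ∈ A, star wm1 * a * wm1 = μ₀ a • (1 : B)) :
    ∀ n ∈ M,
      ((n ∈ N) ↔ (∀ a ∈ A, star wm1 * a * γ n * wm1 = μ₀ a • n)) ∧
      ((n ∈ N) ↔ (∀ a ∈ A, ∀ m ∈ M,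
          star wm1 * a * γ (n * m) * wm1 = n * (star wm1 * a * γ m * wm1))) ∧
      ((n ∈ N) ↔ (∀ a ∈ A, ∀ m ∈ M,
          star wm1 * a * γ (m * n) * wm1 = (star wm1 * a * γ m * wm1) * n)) := by
  -- `1 ∈ A`
  have h1A : (1 : B) ∈ A := by
    rw [hA]
    exact ⟨M.one_mem, fun m _ => by rw [one_mul, mul_one]⟩
  -- the adjoint intertwining relation: `n * star wm1 = star wm1 * γ n` for `n ∈ N`
  have hstar : ∀ n ∈ N, n * star wm1 = star wm1 * γ n := by
    intro n hn
    have := congrArg star (hintN (star n) (star_mem hn))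
    simpa [star_mul, map_star] using this
  intro n hnM
  refine ⟨?_, ?_, ?_⟩
  · constructor
    · intro hnN a haA
      have hcomm : a * γ n = γ n * a := ((hA ▸ haA).2 n (hNM hnN))
      calc star wm1 * a * γ n * wm1 = star wm1 * γ n * a * wm1 := by
            rw [mul_assoc (star wm1), hcomm, ← mul_assoc]
        _ = n * (star wm1 * a * wm1) := by
            rw [← hstar n hnN]; simp only [mul_assoc]
        _ = μ₀ a • n := by rw [hμ₀ a haA, mul_smul_comm, mul_one]
    · intro h
      have h1 := h 1 h1A
      have hμ1 : μ₀ 1 • (1 : B) = 1 := by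
        have := hμ₀ 1 h1A; rw [mul_one] at this; rw [← this, hiso]
      have : star wm1 * γ n * wm1 = n := by
        rw [mul_one] at h1
        calc star wm1 * γ n * wm1 = μ₀ 1 • n := h1
          _ = μ₀ 1 • ((1 : B) * n) := by rw [one_mul]
          _ = (μ₀ 1 • (1 : B)) * n := by rw [smul_mul_assoc]
          _ = n := by rw [hμ1, one_mul]
      exact (hE0fix n hnM).mp this
  · constructor
    · intro hnN a haA m hmM
      have hcomm : a * γ n = γ n * a := ((hA ▸ haA).2 n (hNM hnN))
      calc star wm1 * a * γ (n * m) * wm1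
          = star wm1 * (a * γ n) * γ m * wm1 := by rw [map_mul]; simp only [mul_assoc]
        _ = star wm1 * γ n * (a * γ m) * wm1 := by rw [hcomm]; simp only [mul_assoc]
        _ = n * (star wm1 * a * γ m * wm1) := by rw [← hstar n hnN]; simp only [mul_assoc]
    · intro h
      have h1 := h 1 h1A 1 M.one_mem
      have : star wm1 * γ n * wm1 = n := by
        simpa [hiso, mul_assoc] using h1
      exact (hE0fix n hnM).mp this
  · constructor
    · intro hnN a haA m hmM
      calc star wm1 * a * γ (m * n) * wm1
          = star wm1 * a * γ m * (γ n * wm1) := by rw [map_mul]; simp only [mul_assoc]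
        _ = star wm1 * a * γ m * (wm1 * n) := by rw [← hintN n hnN]
        _ = (star wm1 * a * γ m * wm1) * n := by simp only [mul_assoc]
    · intro h
      have h1 := h 1 h1A 1 M.one_mem
      have : star wm1 * γ n * wm1 = n := by
        simpa [hiso, mul_assoc] using h1
      exact (hE0fix n hnM).mp this
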